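/- Let K be a finite set of natural numbers each of which is a power of 4 and let ℓ be a natural number. Let G be an ordered graph, and for each k ∈ K let P_k be a k-partition of G each of whose parts contains at least ℓ/k edges (i.e., k · |E(b_i, m_i, b_{i+1})| ≥ ℓ for every part), and let E_k denote the union over i ∈ {0, ..., k−1} of the part edge sets E(b_i, m_i, b_{i+1}) of P_k. Then for every k ∈ K, the set E_k \ (⋃_{k'∈K, k'<k} E_{k'}) contains at least ℓ/2 edges, i.e., 2 · |E_k \ ⋃_{k'∈K, k'<k} E_{k'}| ≥ ℓ. -/

import Mathlib

/-- An ordered graph on vertex set `{0, ..., N-1}`: every edge `(u, v)` satisfies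
`u < v` and `v < N`. -/
def IsOrderedGraph (N : ℕ) (E : Finset (ℕ × ℕ)) : Prop :=
  ∀ e ∈ E, e.1 < e.2 ∧ e.2 < N

/-- `E(a, m, b)`: the set of edges `(u, v) ∈ E` with `a ≤ u < m` and `m ≤ v < b`. -/
def edgesBetween (E : Finset (ℕ × ℕ)) (a m b : ℕ) : Finset (ℕ × ℕ) :=
  E.filter fun e => a ≤ e.1 ∧ e.1 < m ∧ m ≤ e.2 ∧ e.2 < b

/-- A `k`-partition of an ordered graph on `{0, ..., N-1}`: a sequence
`0 = b_0 ≤ m_0 ≤ b_1 ≤ m_1 ≤ ⋯ ≤ m_{k-1} ≤ b_k = N`. -/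
def IsPartition (N k : ℕ) (b m : ℕ → ℕ) : Prop :=
  b 0 = 0 ∧ b k = N ∧ ∀ i < k, b i ≤ m i ∧ m i ≤ b (i + 1)

/-- `E_k`: the union of the part edge sets of a `k`-partition given by `b, m`. -/
def partUnion (E : Finset (ℕ × ℕ)) (b m : ℕ → ℕ) (k : ℕ) : Finset (ℕ × ℕ) :=
  (Finset.range k).biUnion fun i => edgesBetween E (b i) (m i) (b (i + 1))

lemma pow4_sum (j : ℕ) : 3 * (∑ t ∈ Finset.range j, 4 ^ t) + 1 = 4 ^ j := by
  induction j with
  | zero => simp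
  | succ n ih => rw [Finset.sum_range_succ, pow_succ]; omega

theorem stmt_10 (N ℓ : ℕ) (E : Finset (ℕ × ℕ)) (hE : IsOrderedGraph N E)
    (K : Finset ℕ) (hK : ∀ k ∈ K, ∃ j : ℕ, k = 4 ^ j)
    (b m : ℕ → ℕ → ℕ)
    (hpart : ∀ k ∈ K, IsPartition N k (b k) (m k))
    (hdense : ∀ k ∈ K, ∀ i < k,
      ℓ ≤ k * (edgesBetween E (b k i) (m k i) (b k (i + 1))).card) :
    ∀ k ∈ K, ℓ ≤ 2 * ((partUnion E (b k) (m k) k) \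
      (K.filter (fun k' => k' < k)).biUnion
        (fun k' => partUnion E (b k') (m k') k')).card := by
  classical
  intro k hk
  obtain ⟨j, hkj⟩ := hK k hk
  have hk0 : 0 < k := hkj ▸ pow_pos (by norm_num) j
  set part : ℕ → Finset (ℕ × ℕ) :=
    fun i => edgesBetween E (b k i) (m k i) (b k (i + 1)) with hpartdef
  obtain ⟨hb0, hbk, hbm⟩ := hpart k hk
  have hmono : ∀ i i', i ≤ i' → i' ≤ k → b k i ≤ b k i' := by
    intro i i' hii' hi'k
    induction i' with
    | zero => have : i = 0 := by omega
              simp [this]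
    | succ n ih =>
      rcases Nat.lt_or_ge i (n + 1) with h | h
      · have h1 : b k i ≤ b k n := ih (by omega) (by omega)
        have h2 := hbm n (by omega)
        omega
      · have : i = n + 1 := by omega
        simp [this]
  set K' := K.filter (fun k' => k' < k) with hK'def
  set U := K'.biUnion (fun k' => partUnion E (b k') (m k') k') with hUdef
  have hpartmem : ∀ i, ∀ e ∈ part i,
      b k i ≤ e.1 ∧ e.1 < m k i ∧ m k i ≤ e.2 ∧ e.2 < b k (i + 1) := by
    intro i e he
    exact (Finset.mem_filter.mp he).2
  have hdisj : ∀ i ∈ Finset.range k, ∀ i' ∈ Finset.range k, i ≠ i' →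
      Disjoint (part i) (part i') := by
    intro i hi i' hi' hne
    simp only [Finset.mem_range] at hi hi'
    rw [Finset.disjoint_left]
    intro e he he'
    obtain ⟨h1, h2, _, _⟩ := hpartmem i e he
    obtain ⟨h1', h2', _, _⟩ := hpartmem i' e he'
    have hmi := (hbm i hi).1
    have hmi2 := (hbm i hi).2
    have hmi' := (hbm i' hi').1
    have hmi2' := (hbm i' hi').2
    rcases Nat.lt_or_ge i i' with h | h
    · have : b k (i + 1) ≤ b k i' := hmono _ _ (by omega) (by omega)
      omega
    · have : b k (i' + 1) ≤ b k i := hmono _ _ (by omega) (by omega)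
      omega
  set Bad := (Finset.range k).filter (fun i => ¬ Disjoint (part i) U) with hBaddef
  set Good := (Finset.range k) \ Bad with hGooddef
  have hGoodsubR : Good ⊆ Finset.range k := Finset.sdiff_subset
  have hgoodsub : Good.biUnion part ⊆ partUnion E (b k) (m k) k \ U := by
    apply Finset.biUnion_subset.mpr
    intro i hi
    have hi' := hi
    simp only [hGooddef, Finset.mem_sdiff, hBaddef, Finset.mem_filter, not_and,
      not_not] at hi'
    intro e he
    refine Finset.mem_sdiff.mpr ⟨?_, ?_⟩
    · rw [partUnion, Finset.mem_biUnion]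
      exact ⟨i, hi'.1, he⟩
    · intro heU
      exact (Finset.disjoint_left.mp (hi'.2 hi'.1) he) heU
  have hcard1 : ∑ i ∈ Good, (part i).card ≤
      (partUnion E (b k) (m k) k \ U).card := by
    rw [← Finset.card_biUnion (fun i hi i' hi' hne =>
      hdisj i (hGoodsubR hi) i' (hGoodsubR hi') hne)]
    exact Finset.card_le_card hgoodsub
  have hdense' : ∀ i ∈ Good, ℓ ≤ k * (part i).card := fun i hi =>
    hdense k hk i (Finset.mem_range.mp (hGoodsubR hi))
  have hsum : Good.card * ℓ ≤ k * ∑ i ∈ Good, (part i).card := by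
    rw [Finset.mul_sum]
    calc Good.card * ℓ = ∑ _i ∈ Good, ℓ := by
          rw [Finset.sum_const, smul_eq_mul]
    _ ≤ ∑ i ∈ Good, k * (part i).card := Finset.sum_le_sum hdense'
  -- bound on Bad
  have hwit : ∀ i ∈ Bad, ∃ p : ℕ × ℕ, p.1 ∈ K' ∧ p.2 < p.1 ∧
      b k i < m p.1 p.2 ∧ m p.1 p.2 < b k (i + 1) := by
    intro i hi
    simp only [hBaddef, Finset.mem_filter] at hi
    obtain ⟨hik, hnd⟩ := hi
    rw [Finset.not_disjoint_iff] at hnd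
    obtain ⟨e, hei, heU⟩ := hnd
    rw [hUdef, Finset.mem_biUnion] at heU
    obtain ⟨k', hk', heP⟩ := heU
    rw [partUnion, Finset.mem_biUnion] at heP
    obtain ⟨t, ht, het⟩ := heP
    rw [Finset.mem_range] at ht
    obtain ⟨h1, h2, h3, h4⟩ := hpartmem i e hei
    obtain ⟨g1, g2, g3, g4⟩ := (Finset.mem_filter.mp het).2
    refine ⟨(k', t), hk', ht, ?_, ?_⟩
    · show b k i < m k' t
      omega
    · show m k' t < b k (i + 1)
      omega
  set f : ℕ → ℕ × ℕ := fun i =>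
    if h : ∃ p : ℕ × ℕ, p.1 ∈ K' ∧ p.2 < p.1 ∧
      b k i < m p.1 p.2 ∧ m p.1 p.2 < b k (i + 1) then h.choose else (0, 0)
    with hfdef
  have hf : ∀ i ∈ Bad, (f i).1 ∈ K' ∧ (f i).2 < (f i).1 ∧
      b k i < m (f i).1 (f i).2 ∧ m (f i).1 (f i).2 < b k (i + 1) := by
    intro i hi
    have h := hwit i hi
    simp only [hfdef, dif_pos h]
    exact h.choose_spec
  have hBadsubR : Bad ⊆ Finset.range k := Finset.filter_subset _ _
  have hBadcard : Bad.card ≤ ∑ k' ∈ K', k' := by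
    have hmain : Bad.card ≤
        (K'.biUnion (fun k' => ({k'} : Finset ℕ) ×ˢ Finset.range k')).card := by
      apply Finset.card_le_card_of_injOn f
      · intro i hi
        obtain ⟨ha, hb, _, _⟩ := hf i hi
        rw [Finset.mem_coe, Finset.mem_biUnion]
        exact ⟨(f i).1, ha, by
          rw [Finset.mem_product]
          exact ⟨Finset.mem_singleton_self _, Finset.mem_range.mpr hb⟩⟩
      · intro i hi i' hi' hfe
        by_contra hne
        obtain ⟨_, _, h3, h4⟩ := hf i hi
        obtain ⟨_, _, h3', h4'⟩ := hf i' hi'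
        rw [hfe] at h3 h4
        have hik : i < k := Finset.mem_range.mp (hBadsubR hi)
        have hik' : i' < k := Finset.mem_range.mp (hBadsubR hi')
        rcases Nat.lt_or_ge i i' with h | h
        · have : b k (i + 1) ≤ b k i' := hmono _ _ (by omega) (by omega)
          omega
        · have hlt : i' < i := by omega
          have : b k (i' + 1) ≤ b k i := hmono _ _ (by omega) (by omega)
          omega
    calc Bad.card ≤ _ := hmain
    _ = ∑ k' ∈ K', k' := by
      rw [Finset.card_biUnion]
      · exact Finset.sum_congr rfl (fun x _ => by
          rw [Finset.card_product, Finset.card_singleton, Finset.card_range,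
            one_mul])
      · intro x hx y hy hxy
        rw [Function.onFun, Finset.disjoint_left]
        intro p hp hp'
        rw [Finset.mem_product, Finset.mem_singleton] at hp hp'
        exact hxy (hp.1 ▸ hp'.1)
  have hsumK' : ∑ k' ∈ K', k' ≤ ∑ t ∈ Finset.range j, 4 ^ t := by
    have hsub : K' ⊆ (Finset.range j).image (fun t => 4 ^ t) := by
      intro k' hk'
      rw [hK'def, Finset.mem_filter] at hk'
      obtain ⟨t, ht⟩ := hK k' hk'.1
      have htj : t < j := by
        have := hk'.2
        rw [ht, hkj] at this
        exact (Nat.pow_lt_pow_iff_right (by norm_num)).mp this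
      rw [Finset.mem_image]
      exact ⟨t, Finset.mem_range.mpr htj, ht.symm⟩
    calc ∑ k' ∈ K', k' ≤ ∑ k' ∈ (Finset.range j).image (fun t => 4 ^ t), k' :=
          Finset.sum_le_sum_of_subset hsub
    _ = ∑ t ∈ Finset.range j, 4 ^ t := Finset.sum_image (by
          intro x _ y _ h
          exact Nat.pow_right_injective (by norm_num) h)
  have hGoodcard : Good.card = k - Bad.card := by
    rw [hGooddef, Finset.card_sdiff_of_subset hBadsubR, Finset.card_range]
  have h3 : 3 * Bad.card + 1 ≤ k := by
    have := pow4_sum j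
    omega
  have h4 : k ≤ 2 * Good.card := by omega
  have hfin : k * ℓ ≤ k * (2 * (partUnion E (b k) (m k) k \ U).card) := by
    calc k * ℓ ≤ 2 * Good.card * ℓ := Nat.mul_le_mul_right ℓ h4
    _ = 2 * (Good.card * ℓ) := by ring
    _ ≤ 2 * (k * ∑ i ∈ Good, (part i).card) := Nat.mul_le_mul_left 2 hsum
    _ ≤ 2 * (k * (partUnion E (b k) (m k) k \ U).card) :=
          Nat.mul_le_mul_left 2 (Nat.mul_le_mul_left k hcard1)
    _ = k * (2 * (partUnion E (b k) (m k) k \ U).card) := by ring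
  exact Nat.le_of_mul_le_mul_left hfin hk0
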